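/- Let D be a maximal Arrow's single-peaked domain on a set A of size m ≥ 3 and let x ∉ A. Then for every order W ∈ D there is exactly one maximal Arrow's single-peaked domain E on A ∪ {x} such that x is a terminal element of E, the domain contraction of E on A equals D, and E contains the order (x,W) obtained by placing x first followed by W. -/

import Mathlib

set_option linter.unusedSectionVars false
set_option linter.unusedVariables false


/-- A list `l` represents a linear order on the finite set `A`:
it is duplicate-free and its members are exactly the elements of `A`,
listed from most to least preferred. -/
def IsLinOrd {α : Type*} (A : Finset α) (l : List α) : Prop :=
  l.Nodup ∧ ∀ a : α, a ∈ l ↔ a ∈ A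

/-- The restriction of the order `l` to the subset `S`. -/
def restrictList {α : Type*} [DecidableEq α] (l : List α) (S : Finset α) : List α :=
  l.filter (fun a => a ∈ S)

/-- The domain contraction of `D` on `S`: the set of restrictions to `S`
of the orders in `D` (as a set, so duplicates are automatically removed). -/
def contraction {α : Type*} [DecidableEq α] (D : Set (List α)) (S : Finset α) :
    Set (List α) :=
  (fun l => restrictList l S) '' D

/-- `D` contains a Condorcet triple: elements `a, b, c` and orders
`v₁, v₂, v₃ ∈ D` restricting on `{a,b,c}` to `a≻b≻c`, `b≻c≻a`, `c≻a≻b`. -/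
def CondorcetTriple {α : Type*} [DecidableEq α] (D : Set (List α)) : Prop :=
  ∃ a b c : α, a ≠ b ∧ a ≠ c ∧ b ≠ c ∧
    ∃ v₁ ∈ D, ∃ v₂ ∈ D, ∃ v₃ ∈ D,
      restrictList v₁ {a, b, c} = [a, b, c] ∧
      restrictList v₂ {a, b, c} = [b, c, a] ∧
      restrictList v₃ {a, b, c} = [c, a, b]

/-- A Condorcet domain on `A`: a set of linear orders on `A` with no Condorcet triple. -/
def IsCondorcetDomain {α : Type*} [DecidableEq α] (A : Finset α) (D : Set (List α)) : Prop :=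
  (∀ l ∈ D, IsLinOrd A l) ∧ ¬ CondorcetTriple D

/-- A maximal Condorcet domain on `A`: no strict superset is a Condorcet domain on `A`. -/
def IsMaxCondorcetDomain {α : Type*} [DecidableEq α] (A : Finset α) (D : Set (List α)) : Prop :=
  IsCondorcetDomain A D ∧ ∀ D' : Set (List α), IsCondorcetDomain A D' → D ⊆ D' → D' = D

/-- `x` is a never-bottom element of the triple `T` for `D`:
no order of `D` ranks `x` below both other elements of `T`. -/
def NeverBottom {α : Type*} [DecidableEq α] (D : Set (List α)) (T : Finset α) (x : α) : Prop :=
  x ∈ T ∧ ∀ l ∈ D, (restrictList l T).getLast? ≠ some x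

/-- An Arrow's single-peaked domain on `A`: a Condorcet domain such that every
3-element subset of `A` has a never-bottom element. -/
def IsArrowSP {α : Type*} [DecidableEq α] (A : Finset α) (D : Set (List α)) : Prop :=
  IsCondorcetDomain A D ∧
    ∀ T : Finset α, T ⊆ A → T.card = 3 → ∃ x : α, NeverBottom D T x

/-- A maximal Arrow's single-peaked domain on `A`. -/
def IsMaxArrowSP {α : Type*} [DecidableEq α] (A : Finset α) (D : Set (List α)) : Prop :=
  IsMaxCondorcetDomain A D ∧ IsArrowSP A D

/-- `a` is a terminal element of `D`: some order of `D` ends with (least element) `a`. -/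
def TerminalElt {α : Type*} (D : Set (List α)) (a : α) : Prop :=
  ∃ l ∈ D, l.getLast? = some a

/-- `l` is an extremal order of `D`: `l ∈ D`, and the first and last elements of `l`
are the two terminal elements of `D`. -/
def IsExtremal {α : Type*} (D : Set (List α)) (l : List α) : Prop :=
  l ∈ D ∧ ∃ s t : α, s ≠ t ∧ l.head? = some s ∧ l.getLast? = some t ∧
    TerminalElt D s ∧ TerminalElt D t ∧ ∀ a : α, TerminalElt D a → a = s ∨ a = t

/-- The position of `a` in the order `l`, the first element being in position 1. -/
def posIn {α : Type*} [DecidableEq α] (l : List α) (a : α) : ℕ :=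
  l.idxOf a + 1

section Ground
variable {α : Type*} [DecidableEq α]

lemma mem_restrict {l : List α} {S : Finset α} {c : α} :
    c ∈ restrictList l S ↔ c ∈ l ∧ c ∈ S := by
  unfold restrictList; simp

lemma restrict_restrict {l : List α} {T A : Finset α}
    (h : ∀ c ∈ T, c ∈ A) : restrictList (restrictList l A) T = restrictList l T := by
  unfold restrictList
  rw [List.filter_filter]
  apply List.filter_congr
  intro c _
  by_cases hc : c ∈ T <;> simp [hc]
  exact h c hc

lemma restrict_nodup {l : List α} {S : Finset α} (h : l.Nodup) :
    (restrictList l S).Nodup := h.filter _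

lemma restrict_append {l₁ l₂ : List α} {S : Finset α} :
    restrictList (l₁ ++ l₂) S = restrictList l₁ S ++ restrictList l₂ S := by
  unfold restrictList; rw [List.filter_append]

lemma restrict_concat_mem {l : List α} {S : Finset α} {x : α} (hx : x ∈ S) :
    restrictList (l ++ [x]) S = restrictList l S ++ [x] := by
  rw [restrict_append]; unfold restrictList; simp [hx]

lemma restrict_cons_mem {l : List α} {S : Finset α} {x : α} (hx : x ∈ S) :
    restrictList (x :: l) S = x :: restrictList l S := by
  unfold restrictList; simp [hx]

lemma restrict_eq_self {l : List α} {S : Finset α} (h : ∀ a ∈ l, a ∈ S) :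
    restrictList l S = l := by
  unfold restrictList
  rw [List.filter_eq_self]
  intro a ha; simpa using h a ha

lemma restrict_congr_set {l : List α} {S T : Finset α}
    (h : ∀ a ∈ l, a ∈ S ↔ a ∈ T) : restrictList l S = restrictList l T := by
  unfold restrictList
  apply List.filter_congr
  intro a ha; simpa using h a ha

lemma getLast?_restrict {l : List α} {S : Finset α} {x : α}
    (hl : l.getLast? = some x) (hx : x ∈ S) :
    (restrictList l S).getLast? = some x := by
  obtain ⟨l', rfl⟩ := List.getLast?_eq_some_iff.mp hl
  rw [restrict_concat_mem hx, List.getLast?_concat]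

lemma two_elem_list {s : List α} {p q : α} (hn : s.Nodup) (hpq : p ≠ q)
    (h : ∀ c, c ∈ s ↔ c = p ∨ c = q) : s = [p, q] ∨ s = [q, p] := by
  rcases s with _ | ⟨c, _ | ⟨d, _ | ⟨e, t⟩⟩⟩
  · exact absurd ((h p).mpr (Or.inl rfl)) (by simp)
  · have hp := (h p).mpr (Or.inl rfl)
    have hq := (h q).mpr (Or.inr rfl)
    simp at hp hq
    exact absurd (hp.trans hq.symm) hpq
  · have hp := (h p).mpr (Or.inl rfl)
    have hq := (h q).mpr (Or.inr rfl)
    have hcd : c ≠ d := by simp at hn; tauto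
    simp at hp hq
    rcases hp with rfl | rfl <;> rcases hq with rfl | rfl <;> simp_all
  · exfalso
    have hc := (h c).mp (by simp)
    have hd := (h d).mp (by simp)
    have he := (h e).mp (by simp)
    simp at hn
    rcases hc with rfl | rfl <;> rcases hd with rfl | rfl <;> tauto

lemma three_elem_last {t : List α} {x a b : α} (hn : t.Nodup)
    (hlast : t.getLast? = some a)
    (hmem : ∀ c, c ∈ t ↔ c = x ∨ c = a ∨ c = b)
    (hxa : x ≠ a) (hxb : x ≠ b) (hab : a ≠ b) :
    t = [x, b, a] ∨ t = [b, x, a] := by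
  obtain ⟨t', rfl⟩ := List.getLast?_eq_some_iff.mp hlast
  have hn' : t'.Nodup := (List.nodup_append.mp hn).1
  have hat' : a ∉ t' := by
    intro hc
    have := List.nodup_append'.mp hn
    exact this.2.2 hc (by simp)
  have hmem' : ∀ c, c ∈ t' ↔ c = x ∨ c = b := by
    intro c
    constructor
    · intro hc
      rcases (hmem c).mp (by simp [hc]) with rfl | rfl | rfl
      · exact Or.inl rfl
      · exact absurd hc hat'
      · exact Or.inr rfl
    · intro hc
      have hcmem : c ∈ t' ++ [a] := (hmem c).mpr (by tauto)
      rcases List.mem_append.mp hcmem with h | h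
      · exact h
      · simp at h
        subst h
        rcases hc with rfl | rfl
        · exact absurd rfl hxa
        · exact absurd rfl (Ne.symm hab)
  rcases two_elem_list hn' hxb hmem' with rfl | rfl
  · exact Or.inl rfl
  · exact Or.inr rfl

end Ground
set_option linter.unusedSectionVars false

section Main
variable {α : Type*} [DecidableEq α]

/-- The candidate unique extension domain. -/
def sdom (A : Finset α) (D : Set (List α)) (x : α) (W : List α) : Set (List α) :=
  {l | IsLinOrd (insert x A) l ∧ restrictList l A ∈ D ∧
    ∀ a b : α, a ∈ A → b ∈ A → a ≠ b → restrictList W {a, b} = [a, b] →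
      (restrictList l {x, a, b}).getLast? ≠ some a}

lemma getLast?_triple {x a b : α} : ([x, a, b] : List α).getLast? = some b := rfl

lemma W_pair {A : Finset α} {W : List α} (hWlin : IsLinOrd A W) {a b : α}
    (ha : a ∈ A) (hb : b ∈ A) (hab : a ≠ b) :
    restrictList W {a, b} = [a, b] ∨ restrictList W {a, b} = [b, a] := by
  apply two_elem_list (restrict_nodup hWlin.1) hab
  intro c
  rw [mem_restrict, hWlin.2]
  simp only [Finset.mem_insert, Finset.mem_singleton]
  constructor
  · rintro ⟨_, h⟩; exact h
  · rintro (rfl | rfl) <;> simp [ha, hb]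

lemma restrict_single_not {x : α} {S : Finset α} (hx : x ∉ S) :
    restrictList [x] S = [] := by
  unfold restrictList; simp [hx]

lemma restrict_cons_not {x : α} {l : List α} {S : Finset α} (hx : x ∉ S) :
    restrictList (x :: l) S = restrictList l S := by
  unfold restrictList; simp [hx]

/-- restriction of `W` (inside `A`) to `{x,a,b}` equals restriction to `{a,b}` when `x ∉ A`. -/
lemma restrict_W_T {A : Finset α} {W : List α} {x a b : α} (hWlin : IsLinOrd A W)
    (hx : x ∉ A) : restrictList W ({x, a, b} : Finset α) = restrictList W {a, b} := by
  apply restrict_congr_set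
  intro c hc
  have hcA : c ∈ A := (hWlin.2 c).mp hc
  have hcx : c ≠ x := fun h => hx (h ▸ hcA)
  simp [hcx]

lemma restrict_consW {A : Finset α} {W : List α} {x a b : α} (hWlin : IsLinOrd A W)
    (hx : x ∉ A) (hWab : restrictList W {a, b} = [a, b]) :
    restrictList (x :: W) ({x, a, b} : Finset α) = [x, a, b] := by
  rw [restrict_cons_mem (by simp), restrict_W_T hWlin hx, hWab]

lemma restrict_concatW {A : Finset α} {W : List α} {x a b : α} (hWlin : IsLinOrd A W)
    (hx : x ∉ A) (hWab : restrictList W {a, b} = [a, b]) :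
    restrictList (W ++ [x]) ({x, a, b} : Finset α) = [a, b, x] := by
  rw [restrict_concat_mem (by simp), restrict_W_T hWlin hx, hWab]; rfl

lemma concat_mem_sdom {A : Finset α} {D : Set (List α)} {x : α} {W : List α}
    (hx : x ∉ A) {u : List α} (hu : IsLinOrd A u) (huD : u ∈ D) :
    u ++ [x] ∈ sdom A D x W := by
  have hxu : x ∉ u := fun h => hx ((hu.2 x).mp h)
  refine ⟨⟨?_, ?_⟩, ?_, ?_⟩
  · rw [List.nodup_append']
    exact ⟨hu.1, List.nodup_singleton x, by
      intro c hc hc'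
      simp at hc'
      exact hxu (hc' ▸ hc)⟩
  · intro c
    simp only [List.mem_append, List.mem_singleton, Finset.mem_insert, hu.2]
    tauto
  · rw [restrict_append, restrict_eq_self (fun a ha => (hu.2 a).mp ha),
      restrict_single_not hx, List.append_nil]
    exact huD
  · intro a b ha hb hab hWab
    rw [restrict_concat_mem (by simp : x ∈ ({x, a, b} : Finset α)), List.getLast?_concat]
    intro h
    exact hx ((Option.some_injective α h) ▸ ha)

lemma cons_mem_sdom {A : Finset α} {D : Set (List α)} {x : α} {W : List α}
    (hx : x ∉ A) (hWlin : IsLinOrd A W) (hW : W ∈ D) :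
    x :: W ∈ sdom A D x W := by
  have hxW : x ∉ W := fun h => hx ((hWlin.2 x).mp h)
  refine ⟨⟨List.nodup_cons.mpr ⟨hxW, hWlin.1⟩, ?_⟩, ?_, ?_⟩
  · intro c
    simp only [List.mem_cons, Finset.mem_insert, hWlin.2]
  · rw [restrict_cons_not hx, restrict_eq_self (fun a ha => (hWlin.2 a).mp ha)]
    exact hW
  · intro a b ha hb hab hWab
    rw [restrict_consW hWlin hx hWab, getLast?_triple]
    intro h
    exact hab (Option.some_injective α h).symm

lemma restrict_toA {A : Finset α} {x : α} {l : List α} (hx : x ∉ A)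
    (hl : IsLinOrd (insert x A) l) : IsLinOrd A (restrictList l A) := by
  refine ⟨restrict_nodup hl.1, ?_⟩
  intro c
  rw [mem_restrict]
  constructor
  · exact fun h => h.2
  · intro h
    exact ⟨(hl.2 c).mpr (Finset.mem_insert_of_mem h), h⟩

end Main
section Main2
variable {α : Type*} [DecidableEq α]

lemma mem_of_pattern {l : List α} {T : Finset α} {pat : List α} {c : α}
    (h : restrictList l T = pat) (hc : c ∈ pat) : c ∈ l :=
  (mem_restrict.mp (h ▸ hc)).1

lemma sdom_noCT {A : Finset α} {D : Set (List α)} {x : α} {W : List α}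
    (hx : x ∉ A) (hDC : ¬ CondorcetTriple D) (hWlin : IsLinOrd A W)
    {S : Set (List α)} (hS : ∀ l ∈ S, l ∈ sdom A D x W) : ¬ CondorcetTriple S := by
  rintro ⟨a, b, c, hab, hac, hbc, v₁, hv₁, v₂, hv₂, v₃, hv₃, p₁, p₂, p₃⟩
  have L₁ := hS v₁ hv₁
  have L₂ := hS v₂ hv₂
  have L₃ := hS v₃ hv₃
  have haI : a ∈ insert x A := (L₁.1.2 a).mp (mem_of_pattern p₁ (by simp))
  have hbI : b ∈ insert x A := (L₁.1.2 b).mp (mem_of_pattern p₁ (by simp))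
  have hcI : c ∈ insert x A := (L₁.1.2 c).mp (mem_of_pattern p₁ (by simp))
  by_cases hxT : x = a ∨ x = b ∨ x = c
  · -- the triple contains x; use the forced never-bottom element
    rcases hxT with rfl | rfl | rfl
    · -- x = a
      have hbA : b ∈ A := by rcases Finset.mem_insert.mp hbI with h | h; exact absurd h.symm hab; exact h
      have hcA : c ∈ A := by rcases Finset.mem_insert.mp hcI with h | h; exact absurd h.symm hac; exact h
      rcases W_pair hWlin hbA hcA hbc with hp | hp
      · exact L₃.2.2 b c hbA hcA hbc hp (by rw [show ({x, b, c} : Finset α) = {x, b, c} from rfl, p₃]; rfl)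
      · refine L₁.2.2 c b hcA hbA hbc.symm (by rw [Finset.pair_comm c b]; exact hp) ?_
        have hset : ({x, c, b} : Finset α) = {x, b, c} := by ext y; simp; tauto
        rw [hset, p₁]; rfl
    · -- x = b
      have haA : a ∈ A := by rcases Finset.mem_insert.mp haI with h | h; exact absurd h hab; exact h
      have hcA : c ∈ A := by rcases Finset.mem_insert.mp hcI with h | h; exact absurd h.symm hbc; exact h
      rcases W_pair hWlin haA hcA hac with hp | hp
      · refine L₂.2.2 a c haA hcA hac hp ?_
        have hset : ({x, a, c} : Finset α) = {a, x, c} := by ext y; simp; tauto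
        rw [hset, p₂]; rfl
      · refine L₁.2.2 c a hcA haA hac.symm (by rw [Finset.pair_comm c a]; exact hp) ?_
        have hset : ({x, c, a} : Finset α) = {a, x, c} := by ext y; simp; tauto
        rw [hset, p₁]; rfl
    · -- x = c
      have haA : a ∈ A := by rcases Finset.mem_insert.mp haI with h | h; exact absurd h hac; exact h
      have hbA : b ∈ A := by rcases Finset.mem_insert.mp hbI with h | h; exact absurd h hbc; exact h
      rcases W_pair hWlin haA hbA hab with hp | hp
      · refine L₂.2.2 a b haA hbA hab hp ?_
        have hset : ({x, a, b} : Finset α) = {a, b, x} := by ext y; simp; tauto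
        rw [hset, p₂]; rfl
      · refine L₃.2.2 b a hbA haA hab.symm (by rw [Finset.pair_comm b a]; exact hp) ?_
        have hset : ({x, b, a} : Finset α) = {a, b, x} := by ext y; simp; tauto
        rw [hset, p₃]; rfl
  · push_neg at hxT
    obtain ⟨hxa, hxb, hxc⟩ := hxT
    have haA : a ∈ A := by rcases Finset.mem_insert.mp haI with h | h; exact absurd h.symm hxa; exact h
    have hbA : b ∈ A := by rcases Finset.mem_insert.mp hbI with h | h; exact absurd h.symm hxb; exact h
    have hcA : c ∈ A := by rcases Finset.mem_insert.mp hcI with h | h; exact absurd h.symm hxc; exact h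
    have hsub : ∀ y ∈ ({a, b, c} : Finset α), y ∈ A := by
      intro y hy; simp at hy; rcases hy with rfl | rfl | rfl <;> assumption
    exact hDC ⟨a, b, c, hab, hac, hbc,
      restrictList v₁ A, L₁.2.1, restrictList v₂ A, L₂.2.1, restrictList v₃ A, L₃.2.1,
      by rw [restrict_restrict hsub]; exact p₁,
      by rw [restrict_restrict hsub]; exact p₂,
      by rw [restrict_restrict hsub]; exact p₃⟩

lemma sdom_isCD {A : Finset α} {D : Set (List α)} {x : α} {W : List α}
    (hx : x ∉ A) (hDC : ¬ CondorcetTriple D) (hWlin : IsLinOrd A W) :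
    IsCondorcetDomain (insert x A) (sdom A D x W) :=
  ⟨fun _ hl => hl.1, sdom_noCT hx hDC hWlin (fun _ hl => hl)⟩

lemma card_xab {A : Finset α} {x a b : α} (hx : x ∉ A) (ha : a ∈ A) (hb : b ∈ A)
    (hab : a ≠ b) : ({x, a, b} : Finset α).card = 3 := by
  have hxa : x ≠ a := fun h => hx (h ▸ ha)
  have hxb : x ≠ b := fun h => hx (h ▸ hb)
  have h1 : x ∉ ({a, b} : Finset α) := by
    simp only [Finset.mem_insert, Finset.mem_singleton]
    push_neg
    exact ⟨hxa, hxb⟩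
  have h2 : a ∉ ({b} : Finset α) := by simpa using hab
  rw [Finset.card_insert_of_notMem h1, Finset.card_insert_of_notMem h2,
    Finset.card_singleton]

lemma sdom_ASP {A : Finset α} {D : Set (List α)} {x : α} {W : List α}
    (hx : x ∉ A) (hD : IsArrowSP A D) (hWlin : IsLinOrd A W) :
    ∀ T : Finset α, T ⊆ insert x A → T.card = 3 →
      ∃ n : α, NeverBottom (sdom A D x W) T n := by
  intro T hTsub hTcard
  by_cases hxT : x ∈ T
  · obtain ⟨a, b, hab, hT'⟩ : ∃ a b, a ≠ b ∧ T.erase x = {a, b} := by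
      have : (T.erase x).card = 2 := by rw [Finset.card_erase_of_mem hxT, hTcard]
      obtain ⟨a, b, hab, h⟩ := Finset.card_eq_two.mp this
      exact ⟨a, b, hab, h⟩
    have hmemA : ∀ c ∈ T.erase x, c ∈ A := by
      intro c hc
      have hcx := Finset.ne_of_mem_erase hc
      rcases Finset.mem_insert.mp (hTsub (Finset.mem_of_mem_erase hc)) with h | h
      · exact absurd h hcx
      · exact h
    have ha : a ∈ A := hmemA a (hT' ▸ by simp)
    have hb : b ∈ A := hmemA b (hT' ▸ by simp)
    have hTeq : T = {x, a, b} := by rw [← Finset.insert_erase hxT, hT']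
    rcases W_pair hWlin ha hb hab with hp | hp
    · refine ⟨a, by rw [hTeq]; simp, ?_⟩
      intro l hl
      rw [hTeq]
      exact hl.2.2 a b ha hb hab hp
    · refine ⟨b, by rw [hTeq]; simp, ?_⟩
      intro l hl
      have hset : ({x, b, a} : Finset α) = {x, a, b} := by ext y; simp; tauto
      rw [hTeq, ← hset]
      exact hl.2.2 b a hb ha hab.symm (by rw [Finset.pair_comm b a]; exact hp)
  · have hTA : T ⊆ A := fun c hc => by
      rcases Finset.mem_insert.mp (hTsub hc) with h | h
      · exact absurd (h ▸ hc) hxT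
      · exact h
    obtain ⟨n, hnT, hn⟩ := hD.2 T hTA hTcard
    refine ⟨n, hnT, ?_⟩
    intro l hl
    rw [← restrict_restrict (fun c hc => hTA hc)]
    exact hn _ hl.2.1

lemma sdom_contraction {A : Finset α} {D : Set (List α)} {x : α} {W : List α}
    (hx : x ∉ A) (hlin : ∀ u ∈ D, IsLinOrd A u) :
    contraction (sdom A D x W) A = D := by
  ext u
  constructor
  · rintro ⟨l, hl, rfl⟩
    exact hl.2.1
  · intro hu
    refine ⟨u ++ [x], concat_mem_sdom hx (hlin u hu) hu, ?_⟩
    show restrictList (u ++ [x]) A = u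
    rw [restrict_append, restrict_eq_self (fun a ha => ((hlin u hu).2 a).mp ha),
      restrict_single_not hx, List.append_nil]

lemma sdom_terminal {A : Finset α} {D : Set (List α)} {x : α} {W : List α}
    (hx : x ∉ A) (hWlin : IsLinOrd A W) (hW : W ∈ D) :
    TerminalElt (sdom A D x W) x :=
  ⟨W ++ [x], concat_mem_sdom hx hWlin hW, List.getLast?_concat⟩

end Main2
section Main3
variable {α : Type*} [DecidableEq α]

lemma insert_mem_sdom {A : Finset α} {D : Set (List α)} {x : α} {W : List α}
    (hx : x ∉ A) (hWlin : IsLinOrd A W) (hW : W ∈ D)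
    {W₁ W₂ : List α} {a : α} (hWeq : W = W₁ ++ a :: W₂) :
    (W₁ ++ a :: x :: W₂) ∈ sdom A D x W := by
  have hxW : x ∉ W := fun h => hx ((hWlin.2 x).mp h)
  have hperm : (W₁ ++ a :: x :: W₂).Perm (x :: W) := by
    have h1 : W₁ ++ a :: x :: W₂ = (W₁ ++ [a]) ++ x :: W₂ := by simp
    rw [h1, hWeq]
    have h2 := List.perm_middle (a := x) (l₁ := W₁ ++ [a]) (l₂ := W₂)
    simpa using h2
  have hmemW₁ : ∀ c ∈ W₁, c ∈ A := fun c hc => (hWlin.2 c).mp (by rw [hWeq]; simp [hc])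
  have hmemW₂ : ∀ c ∈ W₂, c ∈ A := fun c hc => (hWlin.2 c).mp (by rw [hWeq]; simp [hc])
  have haA : a ∈ A := (hWlin.2 a).mp (by rw [hWeq]; simp)
  refine ⟨⟨?_, ?_⟩, ?_, ?_⟩
  · exact hperm.nodup_iff.mpr (List.nodup_cons.mpr ⟨hxW, hWlin.1⟩)
  · intro c
    rw [hperm.mem_iff]
    simp only [List.mem_cons, Finset.mem_insert, hWlin.2]
  · have eA1 : restrictList (W₁ ++ a :: x :: W₂) A
        = restrictList W₁ A ++ restrictList (a :: x :: W₂) A := restrict_append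
    rw [eA1, restrict_cons_mem haA, restrict_cons_not hx,
      restrict_eq_self hmemW₁, restrict_eq_self hmemW₂, ← hWeq]
    exact hW
  · intro p q hp hq hpq hWpq
    have hxp : x ≠ p := fun h => hx (h ▸ hp)
    have hxq : x ≠ q := fun h => hx (h ▸ hq)
    set F₁ := restrictList W₁ ({x, p, q} : Finset α) with hF₁def
    set Fa := restrictList [a] ({x, p, q} : Finset α) with hFadef
    set F₂ := restrictList W₂ ({x, p, q} : Finset α) with hF₂def
    have e2 : restrictList (W₁ ++ a :: x :: W₂) ({x, p, q} : Finset α)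
        = F₁ ++ (Fa ++ (x :: F₂)) := by
      rw [restrict_append]
      congr 1
      show restrictList ([a] ++ x :: W₂) ({x, p, q} : Finset α) = Fa ++ (x :: F₂)
      rw [restrict_append,
        restrict_cons_mem (show x ∈ ({x, p, q} : Finset α) by simp)]
    have e3 : F₁ ++ (Fa ++ F₂) = [p, q] := by
      have : restrictList W ({x, p, q} : Finset α) = F₁ ++ (Fa ++ F₂) := by
        rw [hWeq]
        rw [show W₁ ++ a :: W₂ = W₁ ++ ([a] ++ W₂) from by simp]
        rw [restrict_append, restrict_append]
      rw [← this, restrict_W_T hWlin hx, hWpq]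
    rw [e2]
    rcases eq_or_ne F₂ [] with hF₂ | hF₂
    · rw [hF₂]
      rw [show F₁ ++ (Fa ++ [x]) = (F₁ ++ Fa) ++ [x] from by simp]
      rw [List.getLast?_concat]
      exact fun h => hxp (Option.some_injective α h)
    · rw [show F₁ ++ (Fa ++ (x :: F₂)) = (F₁ ++ Fa ++ [x]) ++ F₂ from by simp]
      rw [List.getLast?_append_of_ne_nil _ hF₂]
      have : F₂.getLast? = some q := by
        rw [show F₂.getLast? = ((F₁ ++ Fa) ++ F₂).getLast? from
          (List.getLast?_append_of_ne_nil _ hF₂).symm]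
        rw [show (F₁ ++ Fa) ++ F₂ = F₁ ++ (Fa ++ F₂) from by simp, e3]
        rfl
      rw [this]
      exact fun h => hpq (Option.some_injective α h).symm

lemma insert_pattern {A : Finset α} {W : List α} {x a b : α}
    (hWlin : IsLinOrd A W) (hx : x ∉ A) {W₁ W₂ : List α}
    (hWeq : W = W₁ ++ a :: W₂) (hWab : restrictList W {a, b} = [a, b]) :
    restrictList (W₁ ++ a :: x :: W₂) ({x, a, b} : Finset α) = [a, x, b] := by
  have haW₁ : a ∉ W₁ := by
    have := hWlin.1
    rw [hWeq] at this
    rcases List.nodup_append'.mp this with ⟨_, _, hdisj⟩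
    exact fun h => hdisj h (by simp)
  set F₁ := restrictList W₁ ({x, a, b} : Finset α) with hF₁def
  set F₂ := restrictList W₂ ({x, a, b} : Finset α) with hF₂def
  have e2 : restrictList (W₁ ++ a :: x :: W₂) ({x, a, b} : Finset α)
      = F₁ ++ (a :: x :: F₂) := by
    rw [restrict_append, restrict_cons_mem (by simp), restrict_cons_mem (by simp)]
  have e3 : F₁ ++ (a :: F₂) = [a, b] := by
    have : restrictList W ({x, a, b} : Finset α) = F₁ ++ (a :: F₂) := by
      rw [hWeq, restrict_append, restrict_cons_mem (by simp)]
    rw [← this, restrict_W_T hWlin hx, hWab]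
  have hF₁ : F₁ = [] := by
    cases hc : F₁ with
    | nil => rfl
    | cons c F₁' =>
      exfalso
      rw [hc] at e3
      have hca : c = a := by
        have := congrArg (fun s => s.head?) e3
        simpa using this
      have hcW₁ : c ∈ W₁ := (mem_restrict.mp (by rw [hc]; simp : c ∈ F₁)).1
      exact haW₁ (hca ▸ hcW₁)
  have hF₂ : F₂ = [b] := by
    rw [hF₁] at e3
    simpa using e3
  rw [e2, hF₁, hF₂]
  simp

end Main3
section Main4
variable {α : Type*} [DecidableEq α]

lemma restrict_xba {x a b : α} (hxa : x ≠ a) (hxb : x ≠ b) :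
    restrictList [x, b, a] ({a, b} : Finset α) = [b, a] := by
  unfold restrictList
  simp [hxa, hxb]

lemma sdom_max {A : Finset α} {D : Set (List α)} {x : α} {W : List α}
    (hx : x ∉ A) (hD : IsMaxArrowSP A D) (hW : W ∈ D) :
    ∀ D' : Set (List α), IsCondorcetDomain (insert x A) D' →
      sdom A D x W ⊆ D' → D' = sdom A D x W := by
  have hWlin : IsLinOrd A W := hD.1.1.1 W hW
  have hDlin : ∀ u ∈ D, IsLinOrd A u := hD.1.1.1
  intro D' hD' hsub
  apply Set.Subset.antisymm _ hsub
  intro l hl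
  have hlin : IsLinOrd (insert x A) l := hD'.1 l hl
  by_contra hlS
  have hsplit : restrictList l A ∉ D ∨ (restrictList l A ∈ D ∧
      ∃ a b, a ∈ A ∧ b ∈ A ∧ a ≠ b ∧ restrictList W {a, b} = [a, b] ∧
        (restrictList l {x, a, b}).getLast? = some a) := by
    by_cases h1 : restrictList l A ∈ D
    · right
      refine ⟨h1, ?_⟩
      by_contra h2
      push_neg at h2
      exact hlS ⟨hlin, h1, fun a b ha hb hab hW' => h2 a b ha hb hab hW'⟩
    · left; exact h1
  rcases hsplit with hP1 | ⟨hP1, a, b, ha, hb, hab, hWab, hlast⟩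
  · -- case: the A-restriction of l is not in D
    set u₀ := restrictList l A with hu₀def
    have hu₀lin : IsLinOrd A u₀ := restrict_toA hx hlin
    have hwlin : ∀ w ∈ D ∪ {u₀}, IsLinOrd A w := by
      rintro w (hw | hw)
      · exact hDlin w hw
      · simp at hw; exact hw ▸ hu₀lin
    have hCT : CondorcetTriple (D ∪ {u₀}) := by
      by_contra hCT
      have hcd : IsCondorcetDomain A (D ∪ {u₀}) := ⟨hwlin, hCT⟩
      have heq := hD.1.2 _ hcd Set.subset_union_left
      refine hP1 ?_
      rw [← heq]
      exact Set.mem_union_right _ rfl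
    obtain ⟨a, b, c, hab, hac, hbc, w₁, hw₁, w₂, hw₂, w₃, hw₃, q₁, q₂, q₃⟩ := hCT
    have haA : a ∈ A := ((hwlin w₁ hw₁).2 a).mp (mem_of_pattern q₁ (by simp))
    have hbA : b ∈ A := ((hwlin w₁ hw₁).2 b).mp (mem_of_pattern q₁ (by simp))
    have hcA : c ∈ A := ((hwlin w₁ hw₁).2 c).mp (mem_of_pattern q₁ (by simp))
    have habc_sub : ∀ y ∈ ({a, b, c} : Finset α), y ∈ A := by
      intro y hy; simp at hy; rcases hy with rfl | rfl | rfl <;> assumption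
    have hxabc : x ∉ ({a, b, c} : Finset α) := fun h => hx (habc_sub x h)
    have lift : ∀ w ∈ D ∪ {u₀},
        ∃ v ∈ D', restrictList v {a, b, c} = restrictList w {a, b, c} := by
      rintro w (hw | hw)
      · refine ⟨w ++ [x], hsub (concat_mem_sdom hx (hDlin w hw) hw), ?_⟩
        rw [restrict_append, restrict_single_not hxabc, List.append_nil]
      · simp at hw
        subst hw
        exact ⟨l, hl, (restrict_restrict habc_sub).symm⟩
    obtain ⟨v₁, hv₁, e₁⟩ := lift w₁ hw₁
    obtain ⟨v₂, hv₂, e₂⟩ := lift w₂ hw₂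
    obtain ⟨v₃, hv₃, e₃⟩ := lift w₃ hw₃
    exact hD'.2 ⟨a, b, c, hab, hac, hbc, v₁, hv₁, v₂, hv₂, v₃, hv₃,
      e₁.trans q₁, e₂.trans q₂, e₃.trans q₃⟩
  · -- case: the pair condition fails for (a, b)
    have hxa : x ≠ a := fun h => hx (h ▸ ha)
    have hxb : x ≠ b := fun h => hx (h ▸ hb)
    set t := restrictList l ({x, a, b} : Finset α) with htdef
    have htn : t.Nodup := restrict_nodup hlin.1
    have hmem : ∀ c, c ∈ t ↔ c = x ∨ c = a ∨ c = b := by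
      intro c
      rw [htdef, mem_restrict]
      constructor
      · rintro ⟨_, hc⟩; simpa using hc
      · intro hc
        refine ⟨?_, by simpa using hc⟩
        rcases hc with rfl | rfl | rfl
        · exact (hlin.2 c).mpr (Finset.mem_insert_self _ _)
        · exact (hlin.2 c).mpr (Finset.mem_insert_of_mem ha)
        · exact (hlin.2 c).mpr (Finset.mem_insert_of_mem hb)
    rcases three_elem_last htn hlast hmem hxa hxb hab with ht | ht
    · -- t = [x, b, a]
      have hset : ({x, b, a} : Finset α) = {x, a, b} := by ext y; simp; tauto
      set u₀ := restrictList l A with hu₀def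
      have hu₀lin : IsLinOrd A u₀ := restrict_toA hx hlin
      have hsub1 : ∀ y ∈ ({a, b} : Finset α), y ∈ A := by
        intro y hy
        simp at hy
        rcases hy with rfl | rfl <;> assumption
      have hsub2 : ∀ y ∈ ({a, b} : Finset α), y ∈ ({x, a, b} : Finset α) := by
        intro y hy
        simp at hy ⊢
        tauto
      have hu₀ab : restrictList u₀ ({a, b} : Finset α) = [b, a] := by
        rw [hu₀def, restrict_restrict hsub1, ← restrict_restrict hsub2,
          ← htdef, ht]
        exact restrict_xba hxa hxb
      have hpat₂ : restrictList (u₀ ++ [x]) ({x, b, a} : Finset α) = [b, a, x] := by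
        rw [hset, restrict_concat_mem (by simp : x ∈ ({x, a, b} : Finset α))]
        have : restrictList u₀ ({x, a, b} : Finset α)
            = restrictList u₀ ({a, b} : Finset α) := by
          apply restrict_congr_set
          intro c hc
          have hcA : c ∈ A := (hu₀lin.2 c).mp hc
          have hcx : c ≠ x := fun h => hx (h ▸ hcA)
          simp [hcx]
        rw [this, hu₀ab]
        rfl
      obtain ⟨W₁, W₂, hWeq⟩ := List.append_of_mem ((hWlin.2 a).mpr ha)
      refine hD'.2 ⟨x, b, a, hxb, hxa, hab.symm, l, hl,
        u₀ ++ [x], hsub (concat_mem_sdom hx hu₀lin hP1),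
        W₁ ++ a :: x :: W₂, hsub (insert_mem_sdom hx hWlin hW hWeq), ?_, hpat₂, ?_⟩
      · rw [hset, ← htdef]; exact ht
      · rw [hset]; exact insert_pattern hWlin hx hWeq hWab
    · -- t = [b, x, a]
      exact hD'.2 ⟨x, a, b, hxa, hxb, hab,
        x :: W, hsub (cons_mem_sdom hx hWlin hW),
        W ++ [x], hsub (concat_mem_sdom hx hWlin hW), l, hl,
        restrict_consW hWlin hx hWab, restrict_concatW hWlin hx hWab,
        by rw [← htdef]; exact ht⟩

end Main4
section Main5
variable {α : Type*} [DecidableEq α]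

lemma valid_subset_sdom {A : Finset α} {D : Set (List α)} {x : α} {W : List α}
    (hx : x ∉ A) (hWlin : IsLinOrd A W) {E : Set (List α)}
    (hE : IsMaxArrowSP (insert x A) E) (hterm : TerminalElt E x)
    (hcon : contraction E A = D) (hxWE : (x :: W) ∈ E) :
    E ⊆ sdom A D x W := by
  intro l hl
  refine ⟨hE.1.1.1 l hl, ?_, ?_⟩
  · rw [← hcon]; exact ⟨l, hl, rfl⟩
  · intro a b ha hb hab hWab
    have hxa : x ≠ a := fun h => hx (h ▸ ha)
    have hxb : x ≠ b := fun h => hx (h ▸ hb)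
    have hTsub : ({x, a, b} : Finset α) ⊆ insert x A := by
      intro y hy
      simp at hy
      rcases hy with rfl | rfl | rfl
      · exact Finset.mem_insert_self _ _
      · exact Finset.mem_insert_of_mem ha
      · exact Finset.mem_insert_of_mem hb
    obtain ⟨n, hnT, hn⟩ := hE.2.2 {x, a, b} hTsub (card_xab hx ha hb hab)
    have hnx : n ≠ x := by
      obtain ⟨l₀, hl₀, hlast₀⟩ := hterm
      intro h
      subst h
      exact hn l₀ hl₀ (getLast?_restrict hlast₀ (by simp))
    have hnb : n ≠ b := by
      intro h
      subst h
      exact hn (x :: W) hxWE (by rw [restrict_consW hWlin hx hWab]; rfl)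
    have hna : n = a := by
      simp at hnT
      tauto
    subst hna
    exact hn l hl

end Main5

/-- For each order `W` in a maximal Arrow's single-peaked domain `D` on a set of size
`m ≥ 3` and `x ∉ A`, there is exactly one maximal Arrow's single-peaked domain on
`A ∪ {x}` with `x` terminal, contracting to `D` on `A`, and containing `(x, W)`. -/
theorem stmt_7 {α : Type*} [DecidableEq α] (A : Finset α) (m : ℕ) (hm : A.card = m)
    (hm3 : 3 ≤ m) (D : Set (List α)) (hD : IsMaxArrowSP A D) (x : α) (hx : x ∉ A)
    (W : List α) (hW : W ∈ D) :
    ∃! E : Set (List α), IsMaxArrowSP (insert x A) E ∧ TerminalElt E x ∧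
      contraction E A = D ∧ (x :: W) ∈ E := by
  have hWlin : IsLinOrd A W := hD.1.1.1 W hW
  have hCD : IsCondorcetDomain (insert x A) (sdom A D x W) :=
    sdom_isCD hx hD.1.1.2 hWlin
  refine ⟨sdom A D x W,
    ⟨⟨⟨hCD, sdom_max hx hD hW⟩, hCD, sdom_ASP hx hD.2 hWlin⟩,
      sdom_terminal hx hWlin hW, sdom_contraction hx hD.1.1.1,
      cons_mem_sdom hx hWlin hW⟩, ?_⟩
  rintro E ⟨hE, hterm, hcon, hxWE⟩
  exact hE.1.2 (sdom A D x W) hCD (valid_subset_sdom hx hWlin hE hterm hcon hxWE) ▸ rfl
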